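/- Let x : ℤ → ℤ be a sequence of integers with x_k ≥ -1 for every k ∈ ℤ. Let i be an integer such that y(m,i) < 0 for some m < i (equivalently, L_x(i) > -∞, i.e., i has only finitely many descendants). Then the number of children of i in the record graph of x is exactly x_{i-1} + 1. -/
import Mathlib


/-- The record map of an integer-valued sequence `x : ℤ → ℤ`: `recordMap x i` is the least
`n > i` such that `∑_{l=i}^{n-1} x l ≥ 0` if such an `n` exists, and `i` otherwise. -/
noncomputable def recordMap (x : ℤ → ℤ) (i : ℤ) : ℤ := by
  classical
  exact if ∃ n, i < n ∧ 0 ≤ ∑ l ∈ Finset.Ico i n, x l then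
    sInf {n : ℤ | i < n ∧ 0 ≤ ∑ l ∈ Finset.Ico i n, x l}
  else i

/-- For a skip-free to the left sequence (`x k ≥ -1` for all `k`), if some partial sum
`y(m,i) = ∑_{l=m}^{i-1} x l` with `m < i` is negative (equivalently `L_x(i) > -∞`, i.e. `i`
has finitely many descendants), then the set of children of `i` in the record graph of `x`
is finite, of cardinality exactly `x (i-1) + 1`. -/
theorem card_children_eq (x : ℤ → ℤ) (hx : ∀ k : ℤ, -1 ≤ x k) (i : ℤ)
    (h : ∃ m < i, ∑ l ∈ Finset.Ico m i, x l < 0) :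
    {j : ℤ | j ≠ i ∧ recordMap x j = i}.Finite ∧
      ({j : ℤ | j ≠ i ∧ recordMap x j = i}.ncard : ℤ) = x (i - 1) + 1 := by
  classical
  set f : ℤ → ℤ := fun k => ∑ l ∈ Finset.Ico k i, x l with hf
  have hfi : f i = 0 := by simp [hf]
  have hsplit : ∀ j n : ℤ, j ≤ n → n ≤ i → (∑ l ∈ Finset.Ico j n, x l) = f j - f n := by
    intro j n h1 h2
    have hu : Finset.Ico j n ∪ Finset.Ico n i = Finset.Ico j i :=
      Finset.Ico_union_Ico_eq_Ico h1 h2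
    have hd : Disjoint (Finset.Ico j n) (Finset.Ico n i) :=
      Finset.Ico_disjoint_Ico_consecutive j n i
    have := Finset.sum_union (f := x) hd
    rw [hu] at this
    simp only [hf]
    linarith [this]
  have hrec : ∀ k : ℤ, k < i → f k = x k + f (k + 1) := by
    intro k hk
    have h1 : ∑ l ∈ Finset.Ico k (k + 1), x l = f k - f (k + 1) :=
      hsplit k (k + 1) (by linarith) (by linarith)
    have h2 : Finset.Ico k (k + 1) = {k} := by
      ext a; simp only [Finset.mem_Ico, Finset.mem_singleton]; omega
    rw [h2, Finset.sum_singleton] at h1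
    linarith
  have hfim : f (i - 1) = x (i - 1) := by
    have := hrec (i - 1) (by omega)
    simp only [sub_add_cancel] at this
    rw [this, hfi]; ring
  -- characterization of children
  have hchar : ∀ j : ℤ, (j ≠ i ∧ recordMap x j = i) ↔
      (j < i ∧ 0 ≤ f j ∧ ∀ n, j < n → n < i → f j < f n) := by
    intro j
    constructor
    · rintro ⟨hne, hr⟩
      unfold recordMap at hr
      by_cases hex : ∃ n, j < n ∧ 0 ≤ ∑ l ∈ Finset.Ico j n, x l
      · rw [if_pos hex] at hr
        have hbdd : BddBelow {n : ℤ | j < n ∧ 0 ≤ ∑ l ∈ Finset.Ico j n, x l} :=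
          ⟨j, fun n hn => le_of_lt hn.1⟩
        have hmem : i ∈ {n : ℤ | j < n ∧ 0 ≤ ∑ l ∈ Finset.Ico j n, x l} := by
          rw [← hr]; exact Int.csInf_mem hex hbdd
        obtain ⟨hji, hfi0⟩ := hmem
        have hfj : 0 ≤ f j := by
          rw [hsplit j i (le_of_lt hji) le_rfl, hfi] at hfi0; linarith
        refine ⟨hji, hfj, ?_⟩
        intro n hn1 hn2
        by_contra hle
        push_neg at hle
        have hnmem : n ∈ {n : ℤ | j < n ∧ 0 ≤ ∑ l ∈ Finset.Ico j n, x l} := by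
          refine ⟨hn1, ?_⟩
          rw [hsplit j n (le_of_lt hn1) (le_of_lt hn2)]; linarith
        have := csInf_le hbdd hnmem
        omega
      · rw [if_neg hex] at hr; exact absurd hr hne
    · rintro ⟨hji, hfj, hmin⟩
      have hiin : i ∈ {n : ℤ | j < n ∧ 0 ≤ ∑ l ∈ Finset.Ico j n, x l} := by
        refine ⟨hji, ?_⟩
        rw [hsplit j i (le_of_lt hji) le_rfl, hfi]; linarith
      have hex : ∃ n, j < n ∧ 0 ≤ ∑ l ∈ Finset.Ico j n, x l := ⟨i, hiin⟩
      have hbdd : BddBelow {n : ℤ | j < n ∧ 0 ≤ ∑ l ∈ Finset.Ico j n, x l} :=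
        ⟨j, fun n hn => le_of_lt hn.1⟩
      have hmem : sInf {n : ℤ | j < n ∧ 0 ≤ ∑ l ∈ Finset.Ico j n, x l} ∈
          {n : ℤ | j < n ∧ 0 ≤ ∑ l ∈ Finset.Ico j n, x l} := Int.csInf_mem hex hbdd
      have hle : sInf {n : ℤ | j < n ∧ 0 ≤ ∑ l ∈ Finset.Ico j n, x l} ≤ i :=
        csInf_le hbdd hiin
      set n := sInf {n : ℤ | j < n ∧ 0 ≤ ∑ l ∈ Finset.Ico j n, x l} with hn
      obtain ⟨hjn, hsum⟩ := hmem
      have hni : n = i := by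
        by_contra hne
        have hni' : n < i := lt_of_le_of_ne hle hne
        have := hmin n hjn hni'
        rw [hsplit j n (le_of_lt hjn) (le_of_lt hni')] at hsum
        linarith
      constructor
      · omega
      · unfold recordMap
        rw [if_pos hex]; exact hni
  set S : Set ℤ := {j : ℤ | j ≠ i ∧ recordMap x j = i} with hS
  -- injectivity of f on S
  have hinj : Set.InjOn f S := by
    intro a ha b hb hab
    rcases lt_trichotomy a b with hlt | heq | hlt
    · have hb' := (hchar b).1 hb
      have ha' := (hchar a).1 ha
      have := ha'.2.2 b hlt hb'.1
      omega
    · exact heq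
    · have hb' := (hchar b).1 hb
      have ha' := (hchar a).1 ha
      have := hb'.2.2 a hlt ha'.1
      omega
  -- image of S under f
  have himg : f '' S = Set.Icc 0 (x (i - 1)) := by
    ext c
    constructor
    · rintro ⟨j, hj, rfl⟩
      obtain ⟨hji, hfj, hmin⟩ := (hchar j).1 hj
      refine ⟨hfj, ?_⟩
      rcases eq_or_lt_of_le (by omega : j ≤ i - 1) with heq | hlt
      · rw [heq, hfim]
      · have := hmin (i - 1) hlt (by omega)
        rw [hfim] at this
        linarith
    · rintro ⟨hc0, hc1⟩
      -- greatest j < i with f j ≤ c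
      obtain ⟨m, hmi, hm⟩ := h
      have hmlt : f m ≤ c := by
        have : f m < 0 := by simpa [hf] using hm
        linarith
      obtain ⟨j, ⟨hji, hfjc⟩, hmax⟩ :=
        Int.exists_greatest_of_bdd (P := fun n => n < i ∧ f n ≤ c)
          ⟨i, fun z hz => le_of_lt hz.1⟩ ⟨m, hmi, hmlt⟩
      have hgt : ∀ n, j < n → n < i → c < f n := by
        intro n hn1 hn2
        by_contra hle
        push_neg at hle
        have := hmax n ⟨hn2, hle⟩
        omega
      have hfjge : c ≤ f j := by
        rcases eq_or_lt_of_le (by omega : j + 1 ≤ i) with heq | hlt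
        · have : j = i - 1 := by omega
          rw [this, hfim]; exact hc1
        · have h1 := hgt (j + 1) (by omega) hlt
          have h2 := hrec j hji
          have h3 := hx j
          linarith
      have hfjeq : f j = c := le_antisymm hfjc hfjge
      refine ⟨j, ?_, hfjeq⟩
      rw [hS, Set.mem_setOf_eq, hchar j]
      refine ⟨hji, by omega, ?_⟩
      intro n hn1 hn2
      rw [hfjeq]
      exact hgt n hn1 hn2
  have hfin : S.Finite := by
    apply Set.Finite.of_finite_image _ hinj
    rw [himg]
    exact Set.finite_Icc 0 (x (i - 1))
  refine ⟨hfin, ?_⟩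
  have hcard : S.ncard = (Set.Icc 0 (x (i - 1))).ncard := by
    rw [← Set.ncard_image_of_injOn hinj, himg]
  rw [hcard, ← Finset.coe_Icc, Set.ncard_coe_finset, Int.card_Icc]
  have : (0:ℤ) ≤ x (i - 1) + 1 := by linarith [hx (i - 1)]
  rw [show x (i - 1) + 1 - 0 = x (i - 1) + 1 by ring]
  exact_mod_cast Int.toNat_of_nonneg this
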